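/- Let f : S^{n-1} → ℝ be positive and continuous, and let R > sup_{θ ∈ S^{n-1}} f(θ). Define A(f, R) as the star body with radial function ρ(-θ) = R - f(θ). Then ⋂_{θ ∈ S^{n-1}} B(-(R - f(θ))θ, R) = ⋂_{x ∈ A(f, R)} B(x, R), i.e., intersecting balls of radius R centered at all points of A(f, R) is the same as intersecting only over its boundary points -(R - f(θ))θ. -/

import Mathlib

open Metric Set

private lemma dist_convex_comb {E : Type*} [NormedAddCommGroup E] [NormedSpace ℝ E]
    (y a b : E) (t : ℝ) (ht0 : 0 ≤ t) (ht1 : t ≤ 1) (R : ℝ)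
    (ha : dist y a ≤ R) (hb : dist y b ≤ R) :
    dist y (t • a + (1 - t) • b) ≤ R := by
  have key : y - (t • a + (1 - t) • b) = t • (y - a) + (1 - t) • (y - b) := by
    module
  calc dist y (t • a + (1 - t) • b) = ‖t • (y - a) + (1 - t) • (y - b)‖ := by
        rw [dist_eq_norm, key]
    _ ≤ ‖t • (y - a)‖ + ‖(1 - t) • (y - b)‖ := norm_add_le _ _
    _ = t * ‖y - a‖ + (1 - t) * ‖y - b‖ := by
        rw [norm_smul, norm_smul, Real.norm_of_nonneg ht0,
          Real.norm_of_nonneg (by linarith)]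
    _ ≤ t * R + (1 - t) * R := by
        have h1 : ‖y - a‖ ≤ R := by rwa [dist_eq_norm] at ha
        have h2 : ‖y - b‖ ≤ R := by rwa [dist_eq_norm] at hb
        have := mul_le_mul_of_nonneg_left h1 ht0
        have := mul_le_mul_of_nonneg_left h2 (by linarith : (0:ℝ) ≤ 1 - t)
        linarith
    _ = R := by ring

theorem ball_inter_over_star_body_eq_boundary (n : ℕ) (f : EuclideanSpace ℝ (Fin n) → ℝ)
    (hf : Continuous f) (hpos : ∀ θ ∈ Metric.sphere (0 : EuclideanSpace ℝ (Fin n)) 1, 0 < f θ)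
    (R : ℝ) (hR : ∀ θ ∈ Metric.sphere (0 : EuclideanSpace ℝ (Fin n)) 1, f θ < R) :
    (⋂ θ ∈ Metric.sphere (0 : EuclideanSpace ℝ (Fin n)) 1,
        Metric.closedBall ((-(R - f θ)) • θ) R) =
      ⋂ x ∈ {x : EuclideanSpace ℝ (Fin n) |
          ∃ θ ∈ Metric.sphere (0 : EuclideanSpace ℝ (Fin n)) 1,
            ∃ s : ℝ, 0 ≤ s ∧ s ≤ R - f (-θ) ∧ x = s • θ},
        Metric.closedBall x R := by
  ext y
  simp only [mem_iInter, mem_closedBall, mem_setOf_eq, mem_sphere_iff_norm, sub_zero]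
  constructor
  · rintro h x ⟨θ, hθ, s, hs0, hs1, rfl⟩
    have hnθ : ‖-θ‖ = 1 := by rwa [norm_neg]
    have hmθ : -θ ∈ Metric.sphere (0 : EuclideanSpace ℝ (Fin n)) 1 := by
      rwa [mem_sphere_iff_norm, sub_zero]
    have hθ' : θ ∈ Metric.sphere (0 : EuclideanSpace ℝ (Fin n)) 1 := by
      rwa [mem_sphere_iff_norm, sub_zero]
    have hm : 0 < R - f (-θ) := sub_pos.mpr (hR _ hmθ)
    have hm' : 0 < R - f θ := sub_pos.mpr (hR _ hθ')
    -- the two boundary centers along direction θ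
    have h1 : dist y ((-(R - f θ)) • θ) ≤ R := h θ hθ
    have h2 : dist y ((R - f (-θ)) • θ) ≤ R := by
      have := h (-θ) hnθ
      have he : (-(R - f (-θ))) • (-θ) = (R - f (-θ)) • θ := by module
      rwa [he] at this
    -- step 1 : y is within R of 0
    have h0 : dist y (0 : EuclideanSpace ℝ (Fin n)) ≤ R := by
      set t : ℝ := (R - f (-θ)) / ((R - f θ) + (R - f (-θ))) with ht_def
      have hden : 0 < (R - f θ) + (R - f (-θ)) := by linarith
      have ht0 : 0 ≤ t := div_nonneg hm.le hden.le
      have ht1 : t ≤ 1 := by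
        rw [div_le_one hden]; linarith
      have hzero : (0 : EuclideanSpace ℝ (Fin n)) =
          t • ((-(R - f θ)) • θ) + (1 - t) • ((R - f (-θ)) • θ) := by
        have hc : t * (-(R - f θ)) + (1 - t) * (R - f (-θ)) = 0 := by
          have hmul : t * ((R - f θ) + (R - f (-θ))) = R - f (-θ) := by
            rw [ht_def]; exact div_mul_cancel₀ _ hden.ne'
          linear_combination -hmul
        calc (0 : EuclideanSpace ℝ (Fin n))
            = (t * (-(R - f θ)) + (1 - t) * (R - f (-θ))) • θ := by rw [hc, zero_smul]
          _ = t • ((-(R - f θ)) • θ) + (1 - t) • ((R - f (-θ)) • θ) := by module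
      rw [hzero]
      exact dist_convex_comb y _ _ t ht0 ht1 R h1 h2
    -- step 2 : s • θ is a convex combination of the boundary point and 0
    set u : ℝ := s / (R - f (-θ)) with hu_def
    have hu0 : 0 ≤ u := div_nonneg hs0 hm.le
    have hu1 : u ≤ 1 := by rw [div_le_one hm]; exact hs1
    have hx : s • θ = u • ((R - f (-θ)) • θ) + (1 - u) • (0 : EuclideanSpace ℝ (Fin n)) := by
      have : u * (R - f (-θ)) = s := by
        rw [hu_def]; exact div_mul_cancel₀ s hm.ne'
      calc s • θ = (u * (R - f (-θ))) • θ := by rw [this]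
        _ = u • ((R - f (-θ)) • θ) + (1 - u) • (0 : EuclideanSpace ℝ (Fin n)) := by module
    rw [hx]
    exact dist_convex_comb y _ _ u hu0 hu1 R h2 h0
  · intro h θ hθ
    have hθ' : θ ∈ Metric.sphere (0 : EuclideanSpace ℝ (Fin n)) 1 := by
      rwa [mem_sphere_iff_norm, sub_zero]
    have hnθ : ‖-θ‖ = 1 := by rwa [norm_neg]
    have hs : (0:ℝ) ≤ R - f θ := (sub_pos.mpr (hR _ hθ')).le
    exact h ((-(R - f θ)) • θ) ⟨-θ, hnθ, R - f θ, hs, by simp, by module⟩
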